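/- Let A be a nontrivial commutative ring, R = A[X] the polynomial ring in one indeterminate, graded by ℤ with deg(X) = 1 (ψ = id : ℤ → ℤ), and H = 2ℤ ≤ ℤ, so that S = R_(H) is the A-subalgebra of R spanned by the even powers of X. Let 𝔞 = ⟨X⁴⟩_R and 𝔟 = ⟨X²⟩_R. Then ⌊𝔞⌋ = ⟨X⟩_R = ⌊𝔟⌋, while ⌊𝔞⌋_H = ⟨X⁴⟩_S is strictly contained in ⟨X²⟩_S = ⌊𝔟⌋_H; in particular ⌊𝔞⌋_H ≠ ⌊𝔟⌋_H, so the converse of Proposition 2.40 b) fails. (Counterexample following Proposition 2.40.) -/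

import Mathlib

set_option synthInstance.maxHeartbeats 1000000
set_option maxHeartbeats 1000000

open MvPolynomial

/-- `suppInd μ` is the characteristic function of the support of `μ`,
so that `X^(suppInd μ) = ∏_{i : μ i > 0} X i`. -/
noncomputable def suppInd {I : Type v} (μ : I →₀ ℕ) : I →₀ ℕ :=
  μ.mapRange (fun n => if n = 0 then 0 else 1) (by simp)

/-- The canonical embedding `ℕ^(⊕I) → ℤ^(⊕I)`. -/
noncomputable def natToInt {I : Type v} (μ : I →₀ ℕ) : I →₀ ℤ :=
  Finsupp.mapRange (Nat.cast : ℕ → ℤ) Nat.cast_zero μ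

/-- A monomial ideal of `A[(X_i)_{i ∈ I}]` is an ideal generated by a set of monomials. -/
def IsMonomialIdeal {A : Type u} [CommRing A] {I : Type v}
    (𝔞 : Ideal (MvPolynomial I A)) : Prop :=
  ∃ E : Set (I →₀ ℕ), 𝔞 = Ideal.span ((fun μ => monomial μ (1 : A)) '' E)

/-- `⌊𝔞⌋` is the ideal generated by the monomials `X^(suppInd μ)` for all monomials
`X^μ ∈ 𝔞`. -/
noncomputable def mvFloor {A : Type u} [CommRing A] {I : Type v}
    (𝔞 : Ideal (MvPolynomial I A)) : Ideal (MvPolynomial I A) :=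
  Ideal.span {f | ∃ μ : I →₀ ℕ, monomial μ (1 : A) ∈ 𝔞 ∧ f = monomial (suppInd μ) (1 : A)}

/-- The degree restriction `S = R_(H)` of `R = A[(X_i)_{i ∈ I}]` (graded via
`ψ : ℤ^(⊕I) → G`) to a subgroup `H ≤ G`: the `A`-subalgebra of `R` generated by the
monomials `X^μ` whose degree `ψ(μ)` lies in `H`. -/
noncomputable def degRestrict (A : Type u) [CommRing A] {I : Type v} {G : Type w} [AddCommGroup G]
    (ψ : (I →₀ ℤ) →+ G) (H : AddSubgroup G) : Subalgebra A (MvPolynomial I A) :=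
  Algebra.adjoin A {f | ∃ μ : I →₀ ℕ, ψ (natToInt μ) ∈ H ∧ f = monomial μ (1 : A)}

/-- The degree restriction `𝔠_(H) = 𝔠 ∩ S` of an ideal `𝔠` of `R`, as an ideal of
`S = R_(H)`. -/
noncomputable def idealRestrict {A : Type u} [CommRing A] {I : Type v} {G : Type w} [AddCommGroup G]
    (ψ : (I →₀ ℤ) →+ G) (H : AddSubgroup G) (𝔠 : Ideal (MvPolynomial I A)) :
    Ideal (degRestrict A ψ H) :=
  Ideal.comap (degRestrict A ψ H).val 𝔠

/-- `E(𝔞)`: the set of minimal elements of `{μ ∈ ℕ^(⊕I) | X^μ ∈ 𝔞}` with respect to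
the componentwise order. -/
def Emin {A : Type u} [CommRing A] {I : Type v} (𝔞 : Ideal (MvPolynomial I A)) :
    Set (I →₀ ℕ) :=
  {μ | monomial μ (1 : A) ∈ 𝔞 ∧ ∀ ν : I →₀ ℕ, monomial ν (1 : A) ∈ 𝔞 → ν ≤ μ → ν = μ}

/-- `m_μ`: the least `m ∈ ℕ` such that `X^(m • suppInd μ) ∈ 𝔞_(H) = 𝔞 ∩ S`. -/
noncomputable def mdeg {A : Type u} [CommRing A] {I : Type v} {G : Type w} [AddCommGroup G]
    (ψ : (I →₀ ℤ) →+ G) (H : AddSubgroup G) (𝔞 : Ideal (MvPolynomial I A))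
    (μ : I →₀ ℕ) : ℕ :=
  sInf {m : ℕ | monomial (m • suppInd μ) (1 : A) ∈ 𝔞 ∧
    monomial (m • suppInd μ) (1 : A) ∈ degRestrict A ψ H}

/-- `⌊𝔞⌋_H`: the ideal of `S = R_(H)` generated by the monomials `X^(m_μ • suppInd μ)`
for `μ ∈ E(𝔞)`. -/
noncomputable def floorH {A : Type u} [CommRing A] {I : Type v} {G : Type w} [AddCommGroup G]
    (ψ : (I →₀ ℤ) →+ G) (H : AddSubgroup G) (𝔞 : Ideal (MvPolynomial I A)) :
    Ideal (degRestrict A ψ H) :=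
  Ideal.span {s | ∃ μ ∈ Emin 𝔞,
    (s : MvPolynomial I A) = monomial (mdeg ψ H 𝔞 μ • suppInd μ) (1 : A)}

section Aux

variable {A : Type u} [CommRing A]

/-- The subalgebra of polynomials supported in even degrees. -/
def evenAlg (A : Type u) [CommRing A] : Subalgebra A (MvPolynomial Unit A) where
  carrier := {f | ∀ μ ∈ f.support, Even (μ ())}
  add_mem' := by
    intro f g hf hg μ hμ
    rcases Finset.mem_union.mp (Finsupp.support_add hμ) with h | h
    · exact hf μ h
    · exact hg μ h
  mul_mem' := by
    classical
    intro f g hf hg μ hμ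
    rcases Finset.mem_add.mp (MvPolynomial.support_mul f g hμ) with ⟨a, ha, b, hb, rfl⟩
    simpa [Finsupp.add_apply] using (hf a ha).add (hg b hb)
  algebraMap_mem' := by
    intro a μ hμ
    have h : coeff μ (MvPolynomial.C (R := A) a) ≠ 0 := by
      simpa [MvPolynomial.mem_support_iff] using hμ
    rw [MvPolynomial.coeff_C] at h
    by_cases h0 : (0 : Unit →₀ ℕ) = μ
    · simp [← h0]
    · simp [h0] at h

lemma aux_dvd_monomial [Nontrivial A] (n : ℕ) (μ : Unit →₀ ℕ) :
    (MvPolynomial.X () : MvPolynomial Unit A) ^ n ∣ monomial μ (1 : A) ↔ n ≤ μ () := by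
  rw [X_pow_eq_monomial]
  constructor
  · rintro ⟨f, hf⟩
    by_contra hn
    have h1 : coeff μ (monomial μ (1 : A)) = 1 := by simp
    rw [hf, MvPolynomial.coeff_monomial_mul'] at h1
    have hle : ¬ Finsupp.single () n ≤ μ := by
      rw [Finsupp.single_le_iff]; exact hn
    rw [if_neg hle] at h1
    exact zero_ne_one h1
  · intro h
    refine ⟨monomial (μ - Finsupp.single () n) 1, ?_⟩
    rw [MvPolynomial.monomial_mul, mul_one, add_tsub_cancel_of_le (Finsupp.single_le_iff.mpr h)]

lemma aux_mem_span_pow [Nontrivial A] (n : ℕ) (μ : Unit →₀ ℕ) :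
    monomial μ (1 : A) ∈ Ideal.span {(MvPolynomial.X () : MvPolynomial Unit A) ^ n} ↔
      n ≤ μ () := by
  rw [Ideal.mem_span_singleton]; exact aux_dvd_monomial n μ

lemma aux_psi (μ : Unit →₀ ℕ) :
    (Finsupp.applyAddHom () : (Unit →₀ ℤ) →+ ℤ) (natToInt μ) = (μ () : ℤ) := by
  simp [natToInt, Finsupp.mapRange_apply]

lemma aux_mem_S_iff [Nontrivial A] (μ : Unit →₀ ℕ) :
    monomial μ (1 : A) ∈
      degRestrict A (Finsupp.applyAddHom () : (Unit →₀ ℤ) →+ ℤ)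
        (AddSubgroup.zmultiples (2 : ℤ)) ↔ Even (μ ()) := by
  constructor
  · intro h
    have hle : degRestrict A (Finsupp.applyAddHom () : (Unit →₀ ℤ) →+ ℤ)
        (AddSubgroup.zmultiples (2 : ℤ)) ≤ evenAlg A := by
      apply Algebra.adjoin_le
      rintro f ⟨ν, hψ, rfl⟩
      intro κ hκ
      have hκν : κ = ν := by
        classical
        rw [MvPolynomial.support_monomial, if_neg (one_ne_zero)] at hκ
        exact Finset.mem_singleton.mp hκ
      subst hκν
      rw [aux_psi, Int.mem_zmultiples_iff] at hψ
      have : Even ((κ () : ℤ)) := (even_iff_two_dvd).mpr hψ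
      exact_mod_cast this
    have := hle h
    apply this
    classical
    rw [MvPolynomial.support_monomial, if_neg (one_ne_zero)]
    exact Finset.mem_singleton_self μ
  · rintro ⟨r, hr⟩
    have hX2 : (MvPolynomial.X () : MvPolynomial Unit A) ^ 2 ∈
        degRestrict A (Finsupp.applyAddHom () : (Unit →₀ ℤ) →+ ℤ)
          (AddSubgroup.zmultiples (2 : ℤ)) := by
      apply Algebra.subset_adjoin
      refine ⟨Finsupp.single () 2, ?_, by rw [X_pow_eq_monomial]⟩
      rw [aux_psi, Int.mem_zmultiples_iff]
      simp
    have hmono : monomial μ (1 : A) = (MvPolynomial.X () : MvPolynomial Unit A) ^ (μ ()) := by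
      rw [X_pow_eq_monomial]
      exact congrArg (fun ν => monomial ν (1 : A)) (Finsupp.unique_single μ)
    rw [hmono, hr, ← two_mul, pow_mul]
    exact pow_mem hX2 r

lemma aux_suppInd {n : ℕ} (hn : n ≠ 0) (μ : Unit →₀ ℕ) (hμ : μ () = n) :
    suppInd μ = Finsupp.single () 1 := by
  ext
  rw [suppInd, Finsupp.mapRange_apply]
  show (if μ () = 0 then 0 else 1) = Finsupp.single () 1 ()
  rw [hμ, if_neg hn, Finsupp.single_eq_same]

lemma aux_Emin [Nontrivial A] (n : ℕ) :
    Emin (Ideal.span {(MvPolynomial.X () : MvPolynomial Unit A) ^ n}) =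
      {Finsupp.single () n} := by
  ext μ
  simp only [Emin, Set.mem_setOf_eq, Set.mem_singleton_iff, aux_mem_span_pow]
  constructor
  · rintro ⟨h1, h2⟩
    exact (h2 (Finsupp.single () n) (by simp) (Finsupp.single_le_iff.mpr h1)).symm
  · rintro rfl
    refine ⟨by simp, fun ν hν hle => ?_⟩
    have h1 : ν () ≤ n := by simpa using hle ()
    have h2 : ν () = n := le_antisymm h1 hν
    rw [Finsupp.unique_single ν, h2]

lemma aux_mdeg [Nontrivial A] {n : ℕ} (hn : n ≠ 0) (he : Even n) :
    mdeg (Finsupp.applyAddHom () : (Unit →₀ ℤ) →+ ℤ) (AddSubgroup.zmultiples (2 : ℤ))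
      (Ideal.span {(MvPolynomial.X () : MvPolynomial Unit A) ^ n})
      (Finsupp.single () n) = n := by
  have hsupp : suppInd (Finsupp.single () n) = Finsupp.single () 1 :=
    aux_suppInd hn _ (Finsupp.single_eq_same)
  have hsmul : ∀ m : ℕ, m • suppInd (Finsupp.single () n) = Finsupp.single () m := by
    intro m
    rw [hsupp, Finsupp.smul_single, smul_eq_mul, mul_one]
  have hset : {m : ℕ | monomial (m • suppInd (Finsupp.single () n)) (1 : A) ∈
      Ideal.span {(MvPolynomial.X () : MvPolynomial Unit A) ^ n} ∧
      monomial (m • suppInd (Finsupp.single () n)) (1 : A) ∈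
        degRestrict A (Finsupp.applyAddHom () : (Unit →₀ ℤ) →+ ℤ)
          (AddSubgroup.zmultiples (2 : ℤ))} = {m : ℕ | n ≤ m ∧ Even m} := by
    ext m
    rw [Set.mem_setOf_eq, Set.mem_setOf_eq, hsmul, aux_mem_span_pow, aux_mem_S_iff,
      Finsupp.single_eq_same]
  rw [mdeg, hset]
  refine le_antisymm (Nat.sInf_le ⟨le_refl n, he⟩) (le_csInf ⟨n, le_refl n, he⟩ ?_)
  rintro m ⟨h1, _⟩
  exact h1

lemma aux_floorH [Nontrivial A] {n : ℕ} (hn : n ≠ 0) (he : Even n) :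
    floorH (Finsupp.applyAddHom () : (Unit →₀ ℤ) →+ ℤ) (AddSubgroup.zmultiples (2 : ℤ))
      (Ideal.span {(MvPolynomial.X () : MvPolynomial Unit A) ^ n}) =
    Ideal.span {s : degRestrict A (Finsupp.applyAddHom () : (Unit →₀ ℤ) →+ ℤ)
      (AddSubgroup.zmultiples (2 : ℤ)) |
      (s : MvPolynomial Unit A) = (MvPolynomial.X () : MvPolynomial Unit A) ^ n} := by
  rw [floorH]
  congr 1
  ext s
  simp only [Set.mem_setOf_eq, aux_Emin, Set.mem_singleton_iff]
  constructor
  · rintro ⟨μ, rfl, hs⟩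
    rw [hs, aux_mdeg hn he, aux_suppInd hn _ (Finsupp.single_eq_same),
      Finsupp.smul_single, smul_eq_mul, mul_one, X_pow_eq_monomial]
  · intro hs
    refine ⟨Finsupp.single () n, rfl, ?_⟩
    rw [hs, aux_mdeg hn he, aux_suppInd hn _ (Finsupp.single_eq_same),
      Finsupp.smul_single, smul_eq_mul, mul_one, X_pow_eq_monomial]

lemma aux_mvFloor [Nontrivial A] {n : ℕ} (hn : n ≠ 0) :
    mvFloor (Ideal.span {(MvPolynomial.X () : MvPolynomial Unit A) ^ n}) =
      Ideal.span {(MvPolynomial.X () : MvPolynomial Unit A)} := by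
  rw [mvFloor]
  congr 1
  ext f
  simp only [Set.mem_setOf_eq, Set.mem_singleton_iff, aux_mem_span_pow]
  constructor
  · rintro ⟨μ, h1, rfl⟩
    have hμ : μ () ≠ 0 := by omega
    have : suppInd μ = Finsupp.single () 1 := by
      ext
      rw [suppInd, Finsupp.mapRange_apply]
      show (if μ () = 0 then 0 else 1) = Finsupp.single () 1 ()
      rw [if_neg hμ, Finsupp.single_eq_same]
    rw [this, ← X_pow_eq_monomial, pow_one]
  · rintro rfl
    refine ⟨Finsupp.single () n, by simp, ?_⟩
    rw [aux_suppInd hn _ (Finsupp.single_eq_same), ← X_pow_eq_monomial, pow_one]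

end Aux

/-- counterexample following Proposition 2.40: over a nontrivial
ring `A`, for `R = A[X]` graded by `ℤ` with `deg X = 1`, `H = 2ℤ`, `𝔞 = ⟨X⁴⟩` and
`𝔟 = ⟨X²⟩`, one has `⌊𝔞⌋ = ⟨X⟩ = ⌊𝔟⌋`, while `⌊𝔞⌋_H = ⟨X⁴⟩_S` is strictly contained
in `⟨X²⟩_S = ⌊𝔟⌋_H`; in particular the converse of Proposition 2.40 b) fails. -/
theorem floorH_counterexample {A : Type u} [CommRing A] [Nontrivial A] :
    let ψ : ((Unit →₀ ℤ) →+ ℤ) := Finsupp.applyAddHom ()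
    let H : AddSubgroup ℤ := AddSubgroup.zmultiples (2 : ℤ)
    let X : MvPolynomial Unit A := MvPolynomial.X ()
    let 𝔞 : Ideal (MvPolynomial Unit A) := Ideal.span {X ^ 4}
    let 𝔟 : Ideal (MvPolynomial Unit A) := Ideal.span {X ^ 2}
    mvFloor 𝔞 = Ideal.span {X} ∧
    mvFloor 𝔟 = Ideal.span {X} ∧
    floorH ψ H 𝔞 = Ideal.span {s : degRestrict A ψ H | (s : MvPolynomial Unit A) = X ^ 4} ∧
    floorH ψ H 𝔟 = Ideal.span {s : degRestrict A ψ H | (s : MvPolynomial Unit A) = X ^ 2} ∧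
    floorH ψ H 𝔞 < floorH ψ H 𝔟 := by
  intro ψ H X 𝔞 𝔟
  have h4 : (4 : ℕ) ≠ 0 := by norm_num
  have h2 : (2 : ℕ) ≠ 0 := by norm_num
  have he4 : Even 4 := ⟨2, rfl⟩
  have he2 : Even 2 := ⟨1, rfl⟩
  refine ⟨aux_mvFloor h4, aux_mvFloor h2, aux_floorH h4 he4, aux_floorH h2 he2, ?_⟩
  rw [aux_floorH h4 he4, aux_floorH h2 he2]
  -- X^2 and X^4 as elements of S
  have hX2S : (X : MvPolynomial Unit A) ^ 2 ∈ degRestrict A ψ H := by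
    rw [X_pow_eq_monomial, aux_mem_S_iff, Finsupp.single_eq_same]
    exact ⟨1, rfl⟩
  have hX4S : (X : MvPolynomial Unit A) ^ 4 ∈ degRestrict A ψ H := by
    rw [X_pow_eq_monomial, aux_mem_S_iff, Finsupp.single_eq_same]
    exact ⟨2, rfl⟩
  set t2 : degRestrict A ψ H := ⟨X ^ 2, hX2S⟩ with ht2
  set t4 : degRestrict A ψ H := ⟨X ^ 4, hX4S⟩ with ht4
  have hset4 : {s : degRestrict A ψ H | (s : MvPolynomial Unit A) = X ^ 4} = {t4} := by
    ext s
    simp only [Set.mem_setOf_eq, Set.mem_singleton_iff]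
    constructor
    · intro hs; exact Subtype.ext hs
    · rintro rfl; rfl
  have hset2 : {s : degRestrict A ψ H | (s : MvPolynomial Unit A) = X ^ 2} = {t2} := by
    ext s
    simp only [Set.mem_setOf_eq, Set.mem_singleton_iff]
    constructor
    · intro hs; exact Subtype.ext hs
    · rintro rfl; rfl
  rw [hset4, hset2]
  refine lt_of_le_of_ne ?_ ?_
  · -- span {t4} ≤ span {t2}
    rw [Ideal.span_singleton_le_span_singleton]
    exact ⟨t2, Subtype.ext (by push_cast; ring)⟩
  · -- span {t4} ≠ span {t2}
    intro heq
    have ht2mem : t2 ∈ Ideal.span {t4} := by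
      rw [heq]; exact Ideal.subset_span rfl
    rw [Ideal.mem_span_singleton] at ht2mem
    obtain ⟨c, hc⟩ := ht2mem
    have hR : (X : MvPolynomial Unit A) ^ 2 = X ^ 4 * (c : MvPolynomial Unit A) := by
      have := congrArg (Subtype.val) hc
      push_cast at this
      exact this
    have hco : coeff (Finsupp.single () 2) ((X : MvPolynomial Unit A) ^ 2) = 1 := by
      rw [X_pow_eq_monomial]; simp
    rw [hR, X_pow_eq_monomial, MvPolynomial.coeff_monomial_mul'] at hco
    have hle4 : ¬ Finsupp.single () 4 ≤ Finsupp.single () 2 := by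
      rw [Finsupp.single_le_iff, Finsupp.single_eq_same]
      norm_num
    rw [if_neg hle4] at hco
    exact zero_ne_one hco
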